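/- Let V be a vector space over ℚ. Then the following are equivalent: (1) for every ℵ0-coloring of V there exist four pairwise distinct vectors e1, e2, e3, e4 ∈ V of the same color such that e1 + e2 = e3 + e4; (2) the dimension of V over ℚ (i.e., the cardinality of a basis) is at least ℵ2. -/

import Mathlib

open Cardinal
namespace SVS

lemma map_eq_of_injOn {α β : Type*} {f : α → β} {s : Set α} (hf : Set.InjOn f s) :
    ∀ (l1 l2 : List α), (∀ a ∈ l1, a ∈ s) → (∀ a ∈ l2, a ∈ s) →
      l1.map f = l2.map f → l1 = l2
  | [], [], _, _, _ => rfl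
  | [], _ :: _, _, _, h => by simp at h
  | _ :: _, [], _, _, h => by simp at h
  | a :: l1, b :: l2, h1, h2, h => by
      simp only [List.map_cons, List.cons.injEq] at h
      have hab : a = b := hf (h1 a (by simp)) (h2 b (by simp)) h.1
      subst hab
      rw [map_eq_of_injOn hf l1 l2 (fun x hx => h1 x (by simp [hx]))
        (fun x hx => h2 x (by simp [hx])) h.2]

variable {W : Type*} [LinearOrder W]

noncomputable def color (code : W → W → ℕ) (g : W →₀ ℚ) : Option (ℚ × List (ℚ × ℕ)) :=
  if h : g.support.Nonempty then
    some (g (g.support.max' h),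
      (g.support.sort (· ≤ ·)).map fun i => (g i, code (g.support.max' h) i))
  else none

lemma eq_of_color_eq (code : W → W → ℕ)
    (hcode : ∀ t : W, Set.InjOn (code t) {y | y ≤ t})
    {g1 g2 : W →₀ ℚ} (h1 : g1.support.Nonempty) (h2 : g2.support.Nonempty)
    (htop : g1.support.max' h1 = g2.support.max' h2)
    (hc : color code g1 = color code g2) : g1 = g2 := by
  set t := g1.support.max' h1 with ht
  rw [color, color, dif_pos h1, dif_pos h2, Option.some_inj, Prod.mk.injEq] at hc
  rw [← htop] at hc
  obtain ⟨hq, hl⟩ := hc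
  have hmem1 : ∀ a ∈ g1.support.sort (· ≤ ·), a ∈ {y | y ≤ t} := by
    intro a ha
    exact Finset.le_max' _ a ((Finset.mem_sort _).mp ha)
  have hmem2 : ∀ a ∈ g2.support.sort (· ≤ ·), a ∈ {y | y ≤ t} := by
    intro a ha
    rw [htop]
    exact Finset.le_max' _ a ((Finset.mem_sort _).mp ha)
  have hsnd : (g1.support.sort (· ≤ ·)).map (code t)
      = (g2.support.sort (· ≤ ·)).map (code t) := by
    have := congrArg (List.map Prod.snd) hl
    simpa [List.map_map, Function.comp_def, ← ht] using this
  have hsort : g1.support.sort (· ≤ ·) = g2.support.sort (· ≤ ·) :=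
    map_eq_of_injOn (hcode t) _ _ hmem1 hmem2 hsnd
  have hsupp : g1.support = g2.support := by
    rw [← Finset.sort_toFinset g1.support (· ≤ ·), hsort, Finset.sort_toFinset]
  rw [hsort] at hl
  have hfst : ∀ a ∈ g2.support.sort (· ≤ ·), g1 a = g2 a := by
    have := congrArg (List.map Prod.fst) hl
    simp only [List.map_map, Function.comp] at this
    exact List.map_inj_left.mp this
  ext a
  by_cases ha : a ∈ g2.support
  · exact hfst a ((Finset.mem_sort _).mpr ha)
  · rw [Finsupp.notMem_support_iff.mp ha, Finsupp.notMem_support_iff.mp (hsupp ▸ ha)]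

lemma exists_coloring (hcnt : ∀ t : W, Set.Countable {y : W | y ≤ t}) :
    ∃ COL : (W →₀ ℚ) → ℕ, ∀ e1 e2 e3 e4 : W →₀ ℚ,
      e1 ≠ e2 → e1 ≠ e3 → e1 ≠ e4 → e2 ≠ e3 → e2 ≠ e4 → e3 ≠ e4 →
      COL e1 = COL e2 → COL e2 = COL e3 → COL e3 = COL e4 →
      e1 + e2 ≠ e3 + e4 := by
  have hex : ∀ t : W, ∃ f : W → ℕ, Set.InjOn f {y : W | y ≤ t} := by
    intro t
    have : Countable ({y : W | y ≤ t} : Set W) := (hcnt t).to_subtype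
    obtain ⟨f, hf⟩ := Countable.exists_injective_nat ({y : W | y ≤ t} : Set W)
    refine ⟨fun y => if h : y ≤ t then f ⟨y, h⟩ else 0, ?_⟩
    intro a ha b hb hab
    simp only [Set.mem_setOf_eq] at ha hb
    simp only [dif_pos ha, dif_pos hb] at hab
    exact congrArg Subtype.val (hf hab)
  choose code hcode using hex
  refine ⟨fun g => Encodable.encode (color code g), ?_⟩
  intro e1 e2 e3 e4 h12 h13 h14 h23 h24 h34 c12 c23 c34 hsum
  simp only at c12 c23 c34
  have col12 : color code e1 = color code e2 := Encodable.encode_injective c12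
  have col23 : color code e2 = color code e3 := Encodable.encode_injective c23
  have col34 : color code e3 = color code e4 := Encodable.encode_injective c34
  have col13 : color code e1 = color code e3 := col12.trans col23
  have col14 : color code e1 = color code e4 := col13.trans col34
  have col24 : color code e2 = color code e4 := col23.trans col34
  -- all nonempty supports
  by_cases hs1 : e1.support.Nonempty
  case neg =>
    have he1 : e1 = 0 := of_not_not (mt Finsupp.support_nonempty_iff.mpr hs1)
    have hn1 : color code e1 = none := dif_neg hs1
    have hn2 : color code e2 = none := col12.symm.trans hn1
    have hs2 : ¬ e2.support.Nonempty := by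
      intro h2
      rw [color, dif_pos h2] at hn2
      simp at hn2
    have he2 : e2 = 0 := of_not_not (mt Finsupp.support_nonempty_iff.mpr hs2)
    exact h12 (he1.trans he2.symm)
  have hnone : color code e1 ≠ none := by rw [color, dif_pos hs1]; simp
  have hs2 : e2.support.Nonempty := by
    by_contra h; exact hnone (col12.trans (dif_neg h))
  have hs3 : e3.support.Nonempty := by
    by_contra h; exact hnone (col13.trans (dif_neg h))
  have hs4 : e4.support.Nonempty := by
    by_contra h; exact hnone (col14.trans (dif_neg h))
  set t1 := e1.support.max' hs1 with ht1
  set t2 := e2.support.max' hs2 with ht2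
  set t3 := e3.support.max' hs3 with ht3
  set t4 := e4.support.max' hs4 with ht4
  set q := e1 t1 with hqdef
  have hq2 : e2 t2 = q := by
    rw [color, color, dif_pos hs1, dif_pos hs2, Option.some_inj, Prod.mk.injEq] at col12
    exact col12.1.symm
  have hq3 : e3 t3 = q := by
    rw [color, color, dif_pos hs1, dif_pos hs3, Option.some_inj, Prod.mk.injEq] at col13
    exact col13.1.symm
  have hq4 : e4 t4 = q := by
    rw [color, color, dif_pos hs1, dif_pos hs4, Option.some_inj, Prod.mk.injEq] at col14
    exact col14.1.symm
  have hqne : q ≠ 0 := Finsupp.mem_support_iff.mp (e1.support.max'_mem hs1)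
  set t := max (max t1 t2) (max t3 t4) with htdef
  have hle1 : t1 ≤ t := le_trans (le_max_left _ _) (le_max_left _ _)
  have hle2 : t2 ≤ t := le_trans (le_max_right _ _) (le_max_left _ _)
  have hle3 : t3 ≤ t := le_trans (le_max_left _ _) (le_max_right _ _)
  have hle4 : t4 ≤ t := le_trans (le_max_right _ _) (le_max_right _ _)
  have htmem : t = t1 ∨ t = t2 ∨ t = t3 ∨ t = t4 := by
    rcases max_choice (max t1 t2) (max t3 t4) with h | h <;> rw [htdef, h]
    · rcases max_choice t1 t2 with h' | h' <;> rw [h']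
      · exact Or.inl rfl
      · exact Or.inr (Or.inl rfl)
    · rcases max_choice t3 t4 with h' | h' <;> rw [h']
      · exact Or.inr (Or.inr (Or.inl rfl))
      · exact Or.inr (Or.inr (Or.inr rfl))
  -- no two of the tops can be equal (else the vectors coincide)
  have ex12 : t1 = t2 → False := fun h => h12 (eq_of_color_eq code hcode hs1 hs2 h col12)
  have ex13 : t1 = t3 → False := fun h => h13 (eq_of_color_eq code hcode hs1 hs3 h col13)
  have ex14 : t1 = t4 → False := fun h => h14 (eq_of_color_eq code hcode hs1 hs4 h col14)
  have ex23 : t2 = t3 → False := fun h => h23 (eq_of_color_eq code hcode hs2 hs3 h col23)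
  have ex24 : t2 = t4 → False := fun h => h24 (eq_of_color_eq code hcode hs2 hs4 h col24)
  have ex34 : t3 = t4 → False := fun h => h34 (eq_of_color_eq code hcode hs3 hs4 h col34)
  have hcoef : e1 t + e2 t = e3 t + e4 t := by
    rw [← Finsupp.add_apply, ← Finsupp.add_apply, hsum]
  have val0 : ∀ (g : W →₀ ℚ) (hg : g.support.Nonempty),
      g.support.max' hg ≤ t → g.support.max' hg ≠ t → g t = 0 := by
    intro g hg hle hne
    by_contra h
    have hm : t ∈ g.support := Finsupp.mem_support_iff.mpr h
    exact hne (le_antisymm hle (Finset.le_max' _ _ hm))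
  rcases htmem with h | h | h | h
  · have v1 : e1 t = q := by rw [h]
    have v2 : e2 t = 0 := val0 e2 hs2 hle2 (fun h' => ex12 (h.symm.trans h'.symm))
    have v3 : e3 t = 0 := val0 e3 hs3 hle3 (fun h' => ex13 (h.symm.trans h'.symm))
    have v4 : e4 t = 0 := val0 e4 hs4 hle4 (fun h' => ex14 (h.symm.trans h'.symm))
    rw [v1, v2, v3, v4] at hcoef
    exact hqne (by linarith)
  · have v2 : e2 t = q := by rw [h]; exact hq2
    have v1 : e1 t = 0 := val0 e1 hs1 hle1 (fun h' => ex12 (h'.trans h))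
    have v3 : e3 t = 0 := val0 e3 hs3 hle3 (fun h' => ex23 (h.symm.trans h'.symm))
    have v4 : e4 t = 0 := val0 e4 hs4 hle4 (fun h' => ex24 (h.symm.trans h'.symm))
    rw [v1, v2, v3, v4] at hcoef
    exact hqne (by linarith)
  · have v3 : e3 t = q := by rw [h]; exact hq3
    have v1 : e1 t = 0 := val0 e1 hs1 hle1 (fun h' => ex13 (h'.trans h))
    have v2 : e2 t = 0 := val0 e2 hs2 hle2 (fun h' => ex23 (h'.trans h))
    have v4 : e4 t = 0 := val0 e4 hs4 hle4 (fun h' => ex34 (h.symm.trans h'.symm))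
    rw [v1, v2, v3, v4] at hcoef
    exact hqne (by linarith)
  · have v4 : e4 t = q := by rw [h]; exact hq4
    have v1 : e1 t = 0 := val0 e1 hs1 hle1 (fun h' => ex14 (h'.trans h))
    have v2 : e2 t = 0 := val0 e2 hs2 hle2 (fun h' => ex24 (h'.trans h))
    have v3 : e3 t = 0 := val0 e3 hs3 hle3 (fun h' => ex34 (h'.trans h))
    rw [v1, v2, v3, v4] at hcoef
    exact hqne (by linarith)


lemma li_add_ne {ι V : Type*} [AddCommGroup V] [Module ℚ V] {b : ι → V}
    (hb : LinearIndependent ℚ b) {i j k l : ι}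
    (hij : i ≠ j) (hik : i ≠ k) (hil : i ≠ l) (hjk : j ≠ k) (hjl : j ≠ l) (hkl : k ≠ l) :
    b i + b j ≠ b k + b l := by
  intro h
  classical
  have hz : ∑ m ∈ ({i, j, k, l} : Finset ι),
      (if m = i then (1 : ℚ) else if m = j then 1 else -1) • b m = 0 := by
    rw [show ({i, j, k, l} : Finset ι) = insert i (insert j (insert k {l})) from rfl,
      Finset.sum_insert (by simp [hij, hik, hil]),
      Finset.sum_insert (by simp [hjk, hjl]),
      Finset.sum_insert (by simp [hkl]), Finset.sum_singleton]
    have q1 : (if i = i then (1:ℚ) else if i = j then 1 else -1) = 1 := by simp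
    have q2 : (if j = i then (1:ℚ) else if j = j then 1 else -1) = 1 := by simp [Ne.symm hij]
    have q3 : (if k = i then (1:ℚ) else if k = j then 1 else -1) = -1 := by
      simp [Ne.symm hik, Ne.symm hjk]
    have q4 : (if l = i then (1:ℚ) else if l = j then 1 else -1) = -1 := by
      simp [Ne.symm hil, Ne.symm hjl]
    rw [q1, q2, q3, q4]
    have h2 : b i + b j - (b k + b l) = 0 := by rw [h]; abel
    rw [← h2]; module
  have := linearIndependent_iff'.mp hb {i, j, k, l}
    (fun m => if m = i then (1 : ℚ) else if m = j then 1 else -1) hz i (by simp)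
  simp at this

end SVS

universe u

open Cardinal in
lemma SVS.forward {V : Type u} [AddCommGroup V] [Module ℚ V]
    (hCol : ∀ COL : V → ℕ,
      ∃ e1 e2 e3 e4 : V,
        e1 ≠ e2 ∧ e1 ≠ e3 ∧ e1 ≠ e4 ∧ e2 ≠ e3 ∧ e2 ≠ e4 ∧ e3 ≠ e4 ∧
        COL e1 = COL e2 ∧ COL e2 = COL e3 ∧ COL e3 = COL e4 ∧
        e1 + e2 = e3 + e4) :
    Cardinal.aleph 2 ≤ Module.rank ℚ V := by
  by_contra hrank
  have hle : Module.rank ℚ V ≤ aleph 1 := by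
    have h2 : (2 : Ordinal) = Order.succ 1 := by
      rw [← Ordinal.add_one_eq_succ]; norm_num
    have := not_le.mp hrank
    rw [h2, aleph_succ, Order.lt_succ_iff] at this
    exact this
  -- W := ω₁ as a type
  set W := (Cardinal.aleph.{u} 1).ord.ToType with hW
  have hcnt : ∀ t : W, Set.Countable {y : W | y ≤ t} := by
    intro t
    have h1 : (Set.Iio t).Countable := by
      rw [countable_iff_lt_aleph_one]
      exact mk_Iio_ord_toType t
    have h2 : {y : W | y ≤ t} = insert t (Set.Iio t) := by
      ext y; simp [le_iff_lt_or_eq, or_comm]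
    rw [h2]
    exact h1.insert t
  obtain ⟨COL, hCOL⟩ := exists_coloring hcnt
  -- embed V into W →₀ ℚ
  let b := Module.Basis.ofVectorSpace ℚ V
  have hmk : #(Module.Basis.ofVectorSpaceIndex ℚ V) ≤ #W := by
    rw [b.mk_eq_rank'', hW, mk_toType, card_ord]
    exact hle
  obtain ⟨f⟩ := Cardinal.le_def _ _ |>.mp hmk
  let φ : V → (W →₀ ℚ) := fun v => Finsupp.mapDomain f (b.repr v)
  have hφinj : Function.Injective φ :=
    (Finsupp.mapDomain_injective f.injective).comp b.repr.injective
  have hφadd : ∀ a c : V, φ (a + c) = φ a + φ c := by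
    intro a c
    simp only [φ, map_add, Finsupp.mapDomain_add]
  obtain ⟨e1, e2, e3, e4, h12, h13, h14, h23, h24, h34, c12, c23, c34, hsum⟩ :=
    hCol (fun v => COL (φ v))
  exact hCOL (φ e1) (φ e2) (φ e3) (φ e4)
    (fun h => h12 (hφinj h)) (fun h => h13 (hφinj h)) (fun h => h14 (hφinj h))
    (fun h => h23 (hφinj h)) (fun h => h24 (hφinj h)) (fun h => h34 (hφinj h))
    c12 c23 c34 (by rw [← hφadd, ← hφadd, hsum])

open Cardinal in
lemma SVS.reverse {V : Type u} [AddCommGroup V] [Module ℚ V]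
    (hrank : Cardinal.aleph 2 ≤ Module.rank ℚ V) (COL : V → ℕ) :
      ∃ e1 e2 e3 e4 : V,
        e1 ≠ e2 ∧ e1 ≠ e3 ∧ e1 ≠ e4 ∧ e2 ≠ e3 ∧ e2 ≠ e4 ∧ e3 ≠ e4 ∧
        COL e1 = COL e2 ∧ COL e2 = COL e3 ∧ COL e3 = COL e4 ∧
        e1 + e2 = e3 + e4 := by
  set A := (Cardinal.aleph.{u} 1).ord.ToType with hA
  set B := (Cardinal.aleph.{u} 2).ord.ToType with hB
  have hmkA : #A = aleph 1 := by rw [hA, mk_toType, card_ord]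
  have hmkB : #B = aleph 2 := by rw [hB, mk_toType, card_ord]
  have hcard : #(A ⊕ B) = aleph 2 := by
    simp only [mk_sum, Cardinal.lift_id, hmkA, hmkB]
    rw [Cardinal.add_eq_max (aleph0_le_aleph 1), max_eq_right (aleph_le_aleph.mpr one_le_two)]
  rw [le_rank_iff_exists_linearIndependent] at hrank
  obtain ⟨s, hs, hli⟩ := hrank
  have : Nonempty ((A ⊕ B) ≃ s) := by
    rw [← Cardinal.eq, hs, hcard]
  obtain ⟨e⟩ := this
  set b : A ⊕ B → V := fun i => ((e i : s) : V) with hbdef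
  have hb : LinearIndependent ℚ b := hli.comp e e.injective
  have hbinj : Function.Injective b := fun i j hh =>
    e.injective (Subtype.coe_injective hh)
  set c : A → B → ℕ := fun a β => COL (b (Sum.inl a) + b (Sum.inr β)) with hcdef
  set S : B → ℕ → Set A := fun β n => {a | c a β = n} with hSdef
  have hAunc : ∀ β : B, ∃ n, ¬ (S β n).Countable := by
    intro β
    by_contra hcon
    push_neg at hcon
    have huniv : (Set.univ : Set A).Countable := by
      have hU : (⋃ n, S β n) = Set.univ :=
        Set.eq_univ_of_forall (fun a => Set.mem_iUnion.mpr ⟨c a β, rfl⟩)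
      rw [← hU]
      exact Set.countable_iUnion hcon
    have := (countable_iff_lt_aleph_one _).mp huniv
    rw [mk_univ, hmkA] at this
    exact lt_irrefl _ this
  choose n hn using hAunc
  set T : ℕ → Set B := fun m => {β | n β = m} with hTdef
  have hT : ∃ m, ¬ #(T m) ≤ aleph 1 := by
    by_contra hcon
    push_neg at hcon
    have hBle : #B ≤ aleph 1 := by
      have hU : (⋃ m : ULift.{u} ℕ, T m.down) = Set.univ :=
        Set.eq_univ_of_forall (fun β => Set.mem_iUnion.mpr ⟨⟨n β⟩, rfl⟩)
      calc #B = #(Set.univ : Set B) := mk_univ.symm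
        _ = #(⋃ m : ULift.{u} ℕ, T m.down) := by rw [hU]
        _ ≤ #(ULift.{u} ℕ) * ⨆ m : ULift.{u} ℕ, #(T m.down) := mk_iUnion_le _
        _ ≤ ℵ₀ * aleph 1 := by
            refine mul_le_mul' (le_of_eq (by rw [mk_uLift, mk_nat, lift_aleph0]))
              (ciSup_le fun m => hcon m.down)
        _ ≤ aleph 1 * aleph 1 := mul_le_mul' (aleph0_le_aleph 1) le_rfl
        _ = aleph 1 := mul_eq_self (aleph0_le_aleph 1)
    rw [hmkB] at hBle
    exact absurd hBle (not_le.mpr (aleph_lt_aleph.mpr one_lt_two))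
  obtain ⟨m, hm⟩ := hT
  have hpair : ∀ β : T m, ∃ p : A × A, p.1 ≠ p.2 ∧ p.1 ∈ S (β : B) m ∧ p.2 ∈ S (β : B) m := by
    rintro ⟨β, hβ⟩
    have hβ' : n β = m := hβ
    have hunc : ¬ (S β m).Countable := hβ' ▸ hn β
    have hnt : (S β m).Nontrivial := by
      by_contra hcon
      rw [Set.not_nontrivial_iff] at hcon
      exact hunc hcon.countable
    obtain ⟨x, hx, y, hy, hxy⟩ := hnt
    exact ⟨(x, y), hxy, hx, hy⟩
  choose Φ hΦne hΦ1 hΦ2 using hpair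
  by_cases hinj : Function.Injective Φ
  · exfalso
    apply hm
    have h1 : #(T m) ≤ #(A × A) := mk_le_of_injective hinj
    have h2 : #(A × A) = aleph 1 := by
      simp only [mk_prod, Cardinal.lift_id, hmkA]
      exact mul_eq_self (aleph0_le_aleph 1)
    rw [h2] at h1
    exact h1
  · rw [Function.not_injective_iff] at hinj
    obtain ⟨β, δ, hΦeq, hβδ⟩ := hinj
    set α : A := (Φ β).1 with hα
    set γ : A := (Φ β).2 with hγ
    have hαγ : α ≠ γ := hΦne β
    have hβδ' : (β : B) ≠ (δ : B) := fun hh => hβδ (Subtype.ext hh)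
    have m1 : c α (β : B) = m := hΦ1 β
    have m2 : c γ (β : B) = m := hΦ2 β
    have m3 : c α (δ : B) = m := by rw [hα, hΦeq]; exact hΦ1 δ
    have m4 : c γ (δ : B) = m := by rw [hγ, hΦeq]; exact hΦ2 δ
    refine ⟨b (Sum.inl α) + b (Sum.inr (β : B)), b (Sum.inl γ) + b (Sum.inr (δ : B)),
      b (Sum.inl α) + b (Sum.inr (δ : B)), b (Sum.inl γ) + b (Sum.inr (β : B)),
      ?_, ?_, ?_, ?_, ?_, ?_, ?_, ?_, ?_, by abel⟩
    · exact li_add_ne hb (by simp) (by simp [hαγ]) (by simp)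
        (by simp) (by simp [hβδ', hβδ'.symm]) (by simp)
    · intro hh
      exact hβδ' (Sum.inr_injective (hbinj (add_left_cancel hh)))
    · intro hh
      exact hαγ (Sum.inl_injective (hbinj (add_right_cancel hh)))
    · intro hh
      exact hαγ (Sum.inl_injective (hbinj (add_right_cancel hh))).symm
    · intro hh
      exact hβδ' (Sum.inr_injective (hbinj (add_left_cancel hh))).symm
    · exact li_add_ne hb (by simp) (by simp [hαγ]) (by simp)
        (by simp) (by simp [hβδ', hβδ'.symm]) (by simp)
    · exact m1.trans m4.symm
    · exact m4.trans m3.symm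
    · exact m3.trans m2.symm

/-- For a vector space `V` over `ℚ`: every `ℵ₀`-coloring of `V` admits four
pairwise distinct monochromatic vectors with `e1 + e2 = e3 + e4` iff the
dimension of `V` over `ℚ` is at least `ℵ₂`. -/
theorem S_vector_space_iff_rank (V : Type*) [AddCommGroup V] [Module ℚ V] :
    (∀ COL : V → ℕ,
      ∃ e1 e2 e3 e4 : V,
        e1 ≠ e2 ∧ e1 ≠ e3 ∧ e1 ≠ e4 ∧ e2 ≠ e3 ∧ e2 ≠ e4 ∧ e3 ≠ e4 ∧
        COL e1 = COL e2 ∧ COL e2 = COL e3 ∧ COL e3 = COL e4 ∧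
        e1 + e2 = e3 + e4) ↔
    Cardinal.aleph 2 ≤ Module.rank ℚ V := by
  exact ⟨SVS.forward, SVS.reverse⟩
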